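/- Let $c_1, c_2$ be distinct real numbers such that the associated interpolatory quadrature has order at least three, i.e., $\int_0^1 (\tau - c_1)(\tau - c_2)\,d\tau = 0$, and assume $b_1, b_2 \neq 0$ where $b_i = \int_0^1 \ell_i(\tau)\,d\tau$. Then the coefficient function $A_{\tau,\sigma} = \sum_{i=1}^2 \frac{1}{b_i}\left(\int_0^\tau \ell_i(\alpha)\,d\alpha\right)\ell_i(\sigma)$ satisfies, for all real $\tau, \sigma$: $A_{\tau,\sigma} = -6\tau(1-\tau)\sigma + \tau(4 - 3\tau)$. -/

import Mathlib

open Matrix MeasureTheory intervalIntegral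

lemma epcrk_integral_lin (c t : ℝ) : (∫ α in (0:ℝ)..t, (α - c)) = t^2/2 - c*t := by
  rw [integral_sub intervalIntegrable_id intervalIntegrable_const]
  simp [integral_id]; ring

lemma epcrk_quad (c₁ c₂ : ℝ) :
    (∫ τ in (0:ℝ)..1, (τ - c₁) * (τ - c₂)) = 1/3 - (c₁+c₂)/2 + c₁*c₂ := by
  have h : ∀ τ:ℝ, (τ - c₁)*(τ - c₂) = τ^2 - (c₁+c₂)*τ + c₁*c₂ := fun τ => by ring
  simp_rw [h]
  rw [integral_add
      (((intervalIntegrable_pow 2)).sub ((intervalIntegrable_id).const_mul _))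
      intervalIntegrable_const,
      integral_sub (intervalIntegrable_pow 2)
      ((intervalIntegrable_id).const_mul _),
      intervalIntegral.integral_const_mul]
  simp [integral_id, integral_pow]; ring

lemma epcrk_key (c₁ c₂ t s : ℝ) (hp : 1/3 - (c₁+c₂)/2 + c₁*c₂ = 0) :
    (1/2-c₁)*((t^2/2-c₂*t)*(s-c₂)) - (1/2-c₂)*((t^2/2-c₁*t)*(s-c₁))
      = (-6*t*(1-t)*s + t*(4-3*t))*((1/2-c₂)*(1/2-c₁)*(c₁-c₂)) := by
  linear_combination ((c₁-c₂)*(-6*t^2*s+3*t^2+6*t*s-3*t)) * hp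

/-- For two distinct nodes `c₁, c₂` whose interpolatory quadrature has order
at least three (`∫₀¹ (τ-c₁)(τ-c₂) dτ = 0`) and nonzero weights, the continuous-stage
Runge-Kutta coefficient of the energy-preserving collocation method is
`A_{τ,σ} = -6τ(1-τ)σ + τ(4-3τ)`. -/
theorem two_stage_fourth_order_coefficient
    (c₁ c₂ : ℝ) (hc : c₁ ≠ c₂)
    (hord : (∫ τ in (0:ℝ)..1, (τ - c₁) * (τ - c₂)) = 0)
    (ℓ₁ ℓ₂ : ℝ → ℝ)
    (hℓ₁ : ∀ τ, ℓ₁ τ = (τ - c₂) / (c₁ - c₂))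
    (hℓ₂ : ∀ τ, ℓ₂ τ = (τ - c₁) / (c₂ - c₁))
    (b₁ b₂ : ℝ)
    (hb₁ : b₁ = ∫ τ in (0:ℝ)..1, ℓ₁ τ)
    (hb₂ : b₂ = ∫ τ in (0:ℝ)..1, ℓ₂ τ)
    (hb₁ne : b₁ ≠ 0) (hb₂ne : b₂ ≠ 0)
    (A : ℝ → ℝ → ℝ)
    (hA : ∀ τ σ, A τ σ =
      b₁⁻¹ * ((∫ α in (0:ℝ)..τ, ℓ₁ α) * ℓ₁ σ) + b₂⁻¹ * ((∫ α in (0:ℝ)..τ, ℓ₂ α) * ℓ₂ σ)) :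
    ∀ τ σ : ℝ, A τ σ = -6 * τ * (1 - τ) * σ + τ * (4 - 3 * τ) := by
  have hd : c₁ - c₂ ≠ 0 := sub_ne_zero.mpr hc
  have hd' : c₂ - c₁ ≠ 0 := sub_ne_zero.mpr (Ne.symm hc)
  have hp : 1/3 - (c₁+c₂)/2 + c₁*c₂ = 0 := by rw [← epcrk_quad]; exact hord
  have hI₁ : ∀ t : ℝ, (∫ α in (0:ℝ)..t, ℓ₁ α) = (t^2/2 - c₂*t)/(c₁-c₂) := by
    intro t
    simp_rw [hℓ₁]
    rw [intervalIntegral.integral_div, epcrk_integral_lin]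
  have hI₂ : ∀ t : ℝ, (∫ α in (0:ℝ)..t, ℓ₂ α) = (t^2/2 - c₁*t)/(c₂-c₁) := by
    intro t
    simp_rw [hℓ₂]
    rw [intervalIntegral.integral_div, epcrk_integral_lin]
  have hb₁v : b₁ = (1/2 - c₂)/(c₁-c₂) := by
    rw [hb₁, hI₁ 1]; ring
  have hb₂v : b₂ = (1/2 - c₁)/(c₂-c₁) := by
    rw [hb₂, hI₂ 1]; ring
  have hu : (1/2 : ℝ) - c₂ ≠ 0 := by
    intro h; apply hb₁ne; rw [hb₁v, h, zero_div]
  have hv : (1/2 : ℝ) - c₁ ≠ 0 := by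
    intro h; apply hb₂ne; rw [hb₂v, h, zero_div]
  intro τ σ
  have hu2 : (1:ℝ) - 2*c₂ ≠ 0 := fun h => hu (by linarith)
  have hv2 : (1:ℝ) - 2*c₁ ≠ 0 := fun h => hv (by linarith)
  have hD : ((1/2-c₂)*(1/2-c₁)*(c₁-c₂)) ≠ 0 := mul_ne_zero (mul_ne_zero hu hv) hd
  have expand : A τ σ =
      ((1/2-c₁)*((τ^2/2-c₂*τ)*(σ-c₂)) - (1/2-c₂)*((τ^2/2-c₁*τ)*(σ-c₁)))
        / ((1/2-c₂)*(1/2-c₁)*(c₁-c₂)) := by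
    rw [hA, hI₁, hI₂, hℓ₁, hℓ₂, hb₁v, hb₂v]
    field_simp
    ring
  rw [expand, epcrk_key c₁ c₂ τ σ hp, mul_div_cancel_right₀ _ hD]
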